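/- If μ is a strong limit cardinal and κ < μ is an infinite cardinal with cf(κ) ≠ cf(μ), then D(μ,κ) = μ. -/

import Mathlib

open Cardinal Ordinal Set

attribute [local instance 2000] isWellOrder_lt

private lemma exists_kappa_le_Iic {μ κ : Cardinal.{0}}
    (hκ : ℵ₀ ≤ κ) (hcof : κ.ord.cof ≠ μ.ord.cof)
    (Y : Set μ.ord.ToType) (hY : #Y = κ) :
    ∃ b : μ.ord.ToType, κ ≤ #↥(Y ∩ Set.Iic b) := by
  by_contra hcon
  push_neg at hcon
  rcases lt_or_ge κ μ.ord.cof with hc1 | hc2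
  · obtain ⟨b, hb⟩ : Set.Bounded (· < ·) Y := by
      refine not_isCofinal_iff.1 fun h => ?_
      have := Order.cof_le h
      rw [cof_toType, hY] at this
      exact absurd hc1 (not_lt.2 this)
    have heq : Y ∩ Set.Iic b = Y :=
      inter_eq_self_of_subset_left (fun y hy => (hb y hy).le)
    have h2 := hcon b
    rw [heq, hY] at h2
    exact lt_irrefl _ h2
  · have hνκ : μ.ord.cof < κ := by
      rcases hc2.lt_or_eq with h | h
      · exact h
      · exact absurd (by rw [← h, Ordinal.cof_cof]) hcof
    have hC : ∀ d, d < κ → ∃ b, d < #↥(Y ∩ Set.Iic b) := by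
      intro d hd
      by_contra hbd
      push_neg at hbd
      obtain ⟨S, hSu, hSc⟩ := Order.exists_cof_eq μ.ord.ToType
      rw [cof_toType] at hSc
      have hcov : Y ⊆ ⋃ (x : S), (Y ∩ Set.Iic (x : μ.ord.ToType)) := by
        intro y hy
        obtain ⟨x, hxS, hx⟩ := hSu y
        exact mem_iUnion.2 ⟨⟨x, hxS⟩, ⟨hy, hx⟩⟩
      have hle : κ ≤ μ.ord.cof * d := by
        calc κ = #Y := hY.symm
        _ ≤ #↥(⋃ (x : S), (Y ∩ Set.Iic (x : μ.ord.ToType))) := mk_le_mk_of_subset hcov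
        _ ≤ #S * ⨆ (x : S), #↥(Y ∩ Set.Iic (x : μ.ord.ToType)) := mk_iUnion_le _
        _ ≤ μ.ord.cof * d := mul_le_mul' (le_of_eq hSc) (ciSup_le' fun x => hbd _)
      exact absurd hle (not_le.2 (Cardinal.mul_lt_of_lt hκ hνκ hd))
    rcases hcof.lt_or_gt with h3 | h4
    · -- cof κ.ord < cof μ.ord
      obtain ⟨S', hS'u, hS'c⟩ := Order.exists_cof_eq κ.ord.ToType
      rw [cof_toType] at hS'c
      choose g hg using fun s : S' =>
        hC _ (Cardinal.card_typein_toType_lt κ (s : κ.ord.ToType))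
      obtain ⟨b', hb'⟩ : Set.Bounded (·<·) (Set.range g) := by
        refine not_isCofinal_iff.1 fun h => ?_
        have := Order.cof_le h
        rw [cof_toType] at this
        exact absurd (lt_of_le_of_lt (mk_range_le.trans_eq hS'c) h3) (not_lt.2 this)
      have hmκ : #↥(Y ∩ Set.Iic b') < κ := hcon b'
      have hstep : ∀ s : S',
          (typein ((·<·) : κ.ord.ToType → κ.ord.ToType → Prop) (s : κ.ord.ToType)).card < #↥(Y ∩ Set.Iic b') := by
        intro s
        refine lt_of_lt_of_le (hg s) (mk_le_mk_of_subset ?_)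
        exact inter_subset_inter_right _ (Iic_subset_Iic.2 (hb' (g s) (mem_range_self s)).le)
      have hmo : (#↥(Y ∩ Set.Iic b')).ord < type ((·<·) : κ.ord.ToType → κ.ord.ToType → Prop) := by
        rw [type_toType]; exact Cardinal.ord_lt_ord.2 hmκ
      obtain ⟨s, hsS, hs⟩ := hS'u (enum ((·<·) : κ.ord.ToType → κ.ord.ToType → Prop) ⟨_, hmo⟩)
      have hle2 : (#↥(Y ∩ Set.Iic b')).ord ≤ typein ((·<·) : κ.ord.ToType → κ.ord.ToType → Prop) s := by
        rw [← typein_enum ((·<·) : κ.ord.ToType → κ.ord.ToType → Prop) hmo]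
        exact (typein_le_typein _).2 (not_lt.2 hs)
      have hcontr := lt_of_le_of_lt
        (le_trans (le_of_eq (card_ord _).symm) (card_le_card hle2)) (hstep ⟨s, hsS⟩)
      exact lt_irrefl _ hcontr
    · -- cof μ.ord < cof κ.ord
      obtain ⟨S, hSu, hSc⟩ := Order.exists_cof_eq μ.ord.ToType
      rw [cof_toType] at hSc
      have hcov : Y ⊆ ⋃ (x : S), (Y ∩ Set.Iic (x : μ.ord.ToType)) := by
        intro y hy
        obtain ⟨x, hxS, hx⟩ := hSu y
        exact mem_iUnion.2 ⟨⟨x, hxS⟩, ⟨hy, hx⟩⟩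
      have hκM : κ ≤ μ.ord.cof * ⨆ (x : S), #↥(Y ∩ Set.Iic (x : μ.ord.ToType)) := by
        calc κ = #Y := hY.symm
        _ ≤ #↥(⋃ (x : S), (Y ∩ Set.Iic (x : μ.ord.ToType))) := mk_le_mk_of_subset hcov
        _ ≤ #S * ⨆ (x : S), #↥(Y ∩ Set.Iic (x : μ.ord.ToType)) := mk_iUnion_le _
        _ ≤ _ := mul_le_mul' (le_of_eq hSc) le_rfl
      have hMκ : (⨆ (x : S), #↥(Y ∩ Set.Iic (x : μ.ord.ToType))) < κ := by
        have hts : (⨆ (x : S), (#↥(Y ∩ Set.Iic (x : μ.ord.ToType))).ord) < κ.ord := by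
          apply Ordinal.iSup_lt_ord
          · rw [hSc]; exact h4
          · exact fun x => Cardinal.ord_lt_ord.2 (hcon x)
        refine lt_of_le_of_lt (ciSup_le' fun x => ?_) (Cardinal.lt_ord.1 hts)
        rw [← card_ord (#↥(Y ∩ Set.Iic (x : μ.ord.ToType)))]
        exact card_le_card (le_ciSup (Ordinal.bddAbove_range _) x)
      exact absurd hκM (not_le.2 (Cardinal.mul_lt_of_lt hκ hνκ hMκ))


private lemma mu_le_mk_family {μ κ : Cardinal.{0}} (hμ : μ.IsStrongLimit)
    (hκ : ℵ₀ ≤ κ) (hκμ : κ < μ)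
    (D : Set (Set μ.ord.ToType)) (hD1 : ∀ Z ∈ D, #Z = κ)
    (hD2 : ∀ Y : Set μ.ord.ToType, #Y = κ → ∃ Z ∈ D, Z ⊆ Y) : μ ≤ #D := by
  by_contra hcon
  push_neg at hcon
  have hc0 : max (#D) κ < μ := max_lt hcon hκμ
  have hc0inf : ℵ₀ ≤ max (#D) κ := le_trans hκ (le_max_right _ _)
  set lam := Order.succ (max (#D) κ) with hlam
  have hlamμ : lam < μ :=
    lt_of_le_of_lt (Order.succ_le_of_lt (Cardinal.cantor _)) (hμ.two_power_lt hc0)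
  have hreg : Cardinal.IsRegular lam := isRegular_succ hc0inf
  have hlaminf : ℵ₀ ≤ lam := hreg.aleph0_le
  have hκlam : κ < lam := lt_of_le_of_lt (le_max_right _ _) (Order.lt_succ _)
  have hθlam : #D < lam := lt_of_le_of_lt (le_max_left _ _) (Order.lt_succ _)
  have hlam_type : lam.ord < type ((·<·) : μ.ord.ToType → μ.ord.ToType → Prop) := by
    rw [type_toType]; exact Cardinal.ord_lt_ord.2 hlamμ
  set b0 := enum ((·<·) : μ.ord.ToType → μ.ord.ToType → Prop) ⟨lam.ord, hlam_type⟩ with hb0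
  have hIio : #↥(Set.Iio b0) = lam := by
    have h1 : #{y // y < b0} = (typein ((·<·) : μ.ord.ToType → μ.ord.ToType → Prop) b0).card :=
      card_typein b0
    rw [hb0, typein_enum, card_ord] at h1
    exact h1
  set DA := {Z | Z ∈ D ∧ Z ⊆ Set.Iio b0} with hDA
  have hDAθ : #DA ≤ #D := mk_le_mk_of_subset (fun Z hZ => hZ.1)
  set f : μ.ord.ToType → Ordinal :=
    fun z => typein ((·<·) : μ.ord.ToType → μ.ord.ToType → Prop) z with hf
  have hfZ : ∀ Z : DA, ∀ z : Z.1, f z < lam.ord := by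
    intro Z z
    have h1 : (z : μ.ord.ToType) < b0 := Z.2.2 z.2
    have h2 := (typein_lt_typein ((·<·) : μ.ord.ToType → μ.ord.ToType → Prop)).2 h1
    rwa [hb0, typein_enum] at h2
  set sZ : DA → Ordinal := fun Z => ⨆ z : Z.1, f z with hsZ
  have hsZlt : ∀ Z, sZ Z < lam.ord := by
    intro Z
    apply Ordinal.iSup_lt_ord _ (hfZ Z)
    rw [hD1 Z.1 Z.2.1, hreg.cof_eq]
    exact hκlam
  set s : Ordinal := ⨆ Z : DA, sZ Z with hs
  have hslt : s < lam.ord := by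
    apply Ordinal.iSup_lt_ord _ hsZlt
    rw [hreg.cof_eq]
    exact lt_of_le_of_lt hDAθ hθlam
  have hstype : s < type ((·<·) : μ.ord.ToType → μ.ord.ToType → Prop) := hslt.trans hlam_type
  obtain ⟨b1, hb1⟩ : ∃ b : μ.ord.ToType, typein ((·<·) : μ.ord.ToType → μ.ord.ToType → Prop) b = s :=
    typein_surj ((·<·) : μ.ord.ToType → μ.ord.ToType → Prop) hstype
  have hIicb1 : #↥(Set.Iic b1) < lam := by
    have h1 : #{y // y < b1} = (typein ((·<·) : μ.ord.ToType → μ.ord.ToType → Prop) b1).card :=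
      card_typein b1
    rw [hb1] at h1
    have h2 : s.card < lam := Cardinal.lt_ord.1 hslt
    have h3 : Set.Iic b1 = Set.Iio b1 ∪ {b1} := (Set.Iio_union_right).symm
    calc #↥(Set.Iic b1) ≤ #↥(Set.Iio b1) + #↥({b1} : Set μ.ord.ToType) := by
          rw [h3]; exact mk_union_le _ _
    _ = s.card + 1 := by rw [show #↥(Set.Iio b1) = s.card from h1, mk_singleton]
    _ < lam := Cardinal.add_lt_of_lt hlaminf h2 (lt_of_lt_of_le one_lt_aleph0 hlaminf)
  have hWκ : κ ≤ #↥(Set.Ioo b1 b0) := by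
    by_contra hW
    push_neg at hW
    have hsplit : Set.Iio b0 ⊆ Set.Iic b1 ∪ Set.Ioo b1 b0 := by
      intro y hy
      rcases le_or_gt y b1 with h | h
      · exact Or.inl h
      · exact Or.inr ⟨h, hy⟩
    have h1 : lam ≤ #↥(Set.Iic b1) + #↥(Set.Ioo b1 b0) := by
      rw [← hIio]
      exact le_trans (mk_le_mk_of_subset hsplit) (mk_union_le _ _)
    exact absurd h1 (not_le.2 (Cardinal.add_lt_of_lt hlaminf hIicb1 (hW.trans hκlam)))
  obtain ⟨Y, hYW, hYκ⟩ := Cardinal.le_mk_iff_exists_subset.1 hWκ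
  obtain ⟨Z, hZD, hZY⟩ := hD2 Y hYκ
  have hZW : Z ⊆ Set.Ioo b1 b0 := hZY.trans hYW
  have hZDA : Z ∈ DA := ⟨hZD, hZW.trans (fun x hx => hx.2)⟩
  have hZne : Z.Nonempty := by
    rw [← Set.nonempty_coe_sort, ← Cardinal.mk_ne_zero_iff, hD1 Z hZD]
    exact (aleph0_pos.trans_le hκ).ne'
  obtain ⟨z, hz⟩ := hZne
  have h1 : f z ≤ s := by
    refine le_trans ?_ (le_ciSup (Ordinal.bddAbove_range _) (⟨Z, hZDA⟩ : DA))
    exact le_ciSup (Ordinal.bddAbove_range _) (⟨z, hz⟩ : ↥Z)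
  have h2 : s < f z := by
    have hlt : b1 < z := (hZW hz).1
    have := (typein_lt_typein ((·<·) : μ.ord.ToType → μ.ord.ToType → Prop)).2 hlt
    rwa [hb1] at this
  exact absurd h1 (not_le.2 h2)

private lemma family_card_le {μ κ : Cardinal.{0}} (hμ : μ.IsStrongLimit)
    (hκ : ℵ₀ ≤ κ) (hκμ : κ < μ) :
    #{Z : Set μ.ord.ToType | #Z = κ ∧ ∃ b, Z ⊆ Set.Iic b} ≤ μ := by
  have hμinf : ℵ₀ ≤ μ := hκ.trans hκμ.le
  have hpow : ∀ b : μ.ord.ToType, #{Z : Set μ.ord.ToType | Z ⊆ Set.Iic b} < μ := by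
    intro b
    have hIic : #↥(Set.Iic b) < μ := by
      have h3 : Set.Iic b = Set.Iio b ∪ {b} := (Set.Iio_union_right).symm
      calc #↥(Set.Iic b) ≤ #↥(Set.Iio b) + #↥({b} : Set μ.ord.ToType) := by
            rw [h3]; exact mk_union_le _ _
      _ = #↥(Set.Iio b) + 1 := by rw [mk_singleton]
      _ < μ := Cardinal.add_lt_of_lt hμinf (Cardinal.mk_Iio_ord_toType b)
            (lt_of_lt_of_le one_lt_aleph0 hμinf)
    have hinj : Function.Injective
        (fun Z : {Z : Set μ.ord.ToType | Z ⊆ Set.Iic b} => (Subtype.val ⁻¹' Z.1 : Set ↥(Set.Iic b))) := by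
      rintro ⟨Z₁, hZ₁⟩ ⟨Z₂, hZ₂⟩ h
      have h1 : Subtype.val '' (Subtype.val ⁻¹' Z₁ : Set ↥(Set.Iic b)) = Z₁ := by
        rw [Set.image_preimage_eq_of_subset]; rwa [Subtype.range_coe]
      have h2 : Subtype.val '' (Subtype.val ⁻¹' Z₂ : Set ↥(Set.Iic b)) = Z₂ := by
        rw [Set.image_preimage_eq_of_subset]; rwa [Subtype.range_coe]
      apply Subtype.ext
      show Z₁ = Z₂
      simp only at h
      rw [← h1, ← h2, h]
    calc #{Z : Set μ.ord.ToType | Z ⊆ Set.Iic b} ≤ #(Set ↥(Set.Iic b)) :=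
          mk_le_of_injective hinj
    _ = 2 ^ #↥(Set.Iic b) := mk_set
    _ < μ := hμ.two_power_lt hIic
  have hsub : {Z : Set μ.ord.ToType | #Z = κ ∧ ∃ b, Z ⊆ Set.Iic b} ⊆
      ⋃ b : μ.ord.ToType, {Z : Set μ.ord.ToType | Z ⊆ Set.Iic b} := by
    rintro Z ⟨-, b, hb⟩
    exact mem_iUnion.2 ⟨b, hb⟩
  calc #{Z : Set μ.ord.ToType | #Z = κ ∧ ∃ b, Z ⊆ Set.Iic b}
      ≤ #↥(⋃ b : μ.ord.ToType, {Z : Set μ.ord.ToType | Z ⊆ Set.Iic b}) :=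
        mk_le_mk_of_subset hsub
  _ ≤ #μ.ord.ToType * ⨆ b : μ.ord.ToType, #{Z : Set μ.ord.ToType | Z ⊆ Set.Iic b} :=
        mk_iUnion_le _
  _ ≤ μ * μ := by
        refine mul_le_mul' (le_of_eq ?_) (ciSup_le' fun b => (hpow b).le)
        rw [mk_toType, card_ord]
  _ = μ := mul_eq_self hμinf

/-- A family `D` of subsets of `α` is dense in `[α]^{κ₂}`. -/
def IsDenseIn {α : Type u} (D : Set (Set α)) (κ₂ : Cardinal.{u}) : Prop :=
  ∀ Y : Set α, #Y = κ₂ → ∃ Z ∈ D, Z ⊆ Y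

/-- The density `D(λ,κ₁,κ₂)`. -/
noncomputable def Density (l κ₁ κ₂ : Cardinal.{u}) : Cardinal.{u} :=
  sInf { c : Cardinal.{u} | ∃ D : Set (Set l.out),
    (∀ X ∈ D, #X = κ₁) ∧ IsDenseIn D κ₂ ∧ c = #D }

theorem density_eq_of_strong_limit (μ κ : Cardinal.{0}) (hμ : μ.IsStrongLimit)
    (hκ : ℵ₀ ≤ κ) (hκμ : κ < μ) (hcof : κ.ord.cof ≠ μ.ord.cof) :
    Density μ κ κ = μ := by
  obtain ⟨e⟩ : Nonempty (μ.out ≃ μ.ord.ToType) := by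
    rw [← Cardinal.eq, mk_out, mk_ord_toType]
  have hpre : ∀ Z : Set μ.ord.ToType, #↥(e ⁻¹' Z) = #Z := by
    intro Z
    rw [← Equiv.symm_symm e, ← Equiv.image_eq_preimage_symm]
    exact Cardinal.mk_image_eq e.symm.injective
  -- the dense family
  have hDβdense : ∀ Y : Set μ.ord.ToType, #Y = κ →
      ∃ Z ∈ {Z : Set μ.ord.ToType | #Z = κ ∧ ∃ b, Z ⊆ Set.Iic b}, Z ⊆ Y := by
    intro Y hY
    obtain ⟨b, hb⟩ := exists_kappa_le_Iic hκ hcof Y hY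
    obtain ⟨Z, hZsub, hZκ⟩ := Cardinal.le_mk_iff_exists_subset.1 hb
    exact ⟨Z, ⟨hZκ, b, hZsub.trans Set.inter_subset_right⟩, hZsub.trans Set.inter_subset_left⟩
  have hmem : #↥((fun Z => e ⁻¹' Z) '' {Z : Set μ.ord.ToType | #Z = κ ∧ ∃ b, Z ⊆ Set.Iic b}) ∈
      { c : Cardinal.{0} | ∃ D : Set (Set μ.out),
        (∀ X ∈ D, #X = κ) ∧ IsDenseIn D κ ∧ c = #D } := by
    refine ⟨_, ?_, ?_, rfl⟩
    · rintro X ⟨Z, hZ, rfl⟩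
      rw [hpre]; exact hZ.1
    · intro Y hY
      have hY' : #↥(e.symm ⁻¹' Y) = κ := by
        rw [← Equiv.image_eq_preimage_symm]
        rw [Cardinal.mk_image_eq e.injective]; exact hY
      obtain ⟨Z, hZ, hZY⟩ := hDβdense (e.symm ⁻¹' Y) hY'
      refine ⟨e ⁻¹' Z, ⟨Z, hZ, rfl⟩, ?_⟩
      intro x hx
      have := hZY hx
      simpa using this
  have hub : #↥((fun Z => e ⁻¹' Z) '' {Z : Set μ.ord.ToType | #Z = κ ∧ ∃ b, Z ⊆ Set.Iic b}) ≤ μ :=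
    le_trans mk_image_le (family_card_le hμ hκ hκμ)
  apply le_antisymm
  · exact le_trans (csInf_le' hmem) hub
  · refine le_csInf ⟨_, hmem⟩ ?_
    rintro c ⟨D, hD1, hD2, rfl⟩
    have hD'1 : ∀ Z' ∈ (fun X : Set μ.out => e '' X) '' D, #Z' = κ := by
      rintro Z' ⟨X, hX, rfl⟩
      rw [Cardinal.mk_image_eq e.injective]
      exact hD1 X hX
    have hD'2 : ∀ Y : Set μ.ord.ToType, #Y = κ →
        ∃ Z' ∈ (fun X : Set μ.out => e '' X) '' D, Z' ⊆ Y := by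
      intro Y hY
      obtain ⟨X, hX, hXY⟩ := hD2 (e ⁻¹' Y) (by rw [hpre, hY])
      refine ⟨e '' X, ⟨X, hX, rfl⟩, ?_⟩
      calc e '' X ⊆ e '' (e ⁻¹' Y) := Set.image_mono hXY
      _ = Y := Set.image_preimage_eq Y e.surjective
    exact le_trans (mu_le_mk_family hμ hκ hκμ _ hD'1 hD'2) mk_image_le
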